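/- Let (Φ_t)_{t≥0} be a continuous one-parameter semigroup on the right half-plane Π with Denjoy–Wolff point at ∞, generated by −φ, where φ has no zeros in Π and admits the representation φ(w) = β + γ/(w+1) + ϱ₁(w) with β, γ ∈ ℂ, β ≠ 0, and w·ϱ₁(w) → 0 as |w| → ∞, w ∈ Π. Let σ be the holomorphic function with σ'(w) = 1/φ(w), σ(1) = 0. Then for every w ∈ Π, lim_{t→∞} t·( Φ_t(w) − Φ_t(1) − β·σ(w) ) = γ·σ(w)/β. -/

import Mathlib

open Complex Filter Topology Set MeasureTheory

noncomputable section

/-- The right half-plane in the complex plane. -/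
def rightHalfPlane : Set ℂ := {w : ℂ | 0 < w.re}

/-- A continuous one-parameter semigroup `Φ` on the right half-plane generated by `-φ`,
where `Re φ ≥ 0`: each `Φ t` is a holomorphic self-map of the half-plane, `Φ 0 = id`,
`Φ (t+s) = Φ t ∘ Φ s`, and for each `w` the trajectory `t ↦ Φ t w` solves
`∂Φ_t(w)/∂t = φ(Φ_t(w))`. -/
structure IsContinuousSemigroupOnHalfPlane (Φ : ℝ → ℂ → ℂ) (φ : ℂ → ℂ) : Prop where
  mapsTo : ∀ t : ℝ, 0 ≤ t → Set.MapsTo (Φ t) rightHalfPlane rightHalfPlane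
  holomorphic : ∀ t : ℝ, 0 ≤ t → DifferentiableOn ℂ (Φ t) rightHalfPlane
  init : ∀ w ∈ rightHalfPlane, Φ 0 w = w
  semigroup : ∀ t s : ℝ, 0 ≤ t → 0 ≤ s → ∀ w ∈ rightHalfPlane, Φ (t + s) w = Φ t (Φ s w)
  gen_holomorphic : DifferentiableOn ℂ φ rightHalfPlane
  gen_re_nonneg : ∀ w ∈ rightHalfPlane, 0 ≤ (φ w).re
  ode : ∀ w ∈ rightHalfPlane, ∀ t : ℝ, 0 ≤ t →
    HasDerivWithinAt (fun s : ℝ => Φ s w) (φ (Φ t w)) (Set.Ici (0 : ℝ)) t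

/-- The semigroup has Denjoy–Wolff point at `∞`. -/
def HasDWPointInfty (Φ : ℝ → ℂ → ℂ) : Prop :=
  ∀ w ∈ rightHalfPlane, Tendsto (fun t : ℝ => ‖Φ t w‖) atTop atTop

/-- The filter of neighbourhoods of `∞` within a set `S ⊆ ℂ`:
`|w| → ∞` with `w ∈ S`. -/
def atInftyWithin (S : Set ℂ) : Filter ℂ :=
  Filter.comap (fun w : ℂ => ‖w‖) Filter.atTop ⊓ Filter.principal S

/-- `σ` solves `σ' = 1/φ` on the right half-plane with `σ 1 = 0`. -/
def IsSigmaFunction (φ σ : ℂ → ℂ) : Prop :=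
  (∀ w ∈ rightHalfPlane, HasDerivAt σ (1 / φ w) w) ∧ σ 1 = 0

lemma eventually_atInftyWithin {S : Set ℂ} {P : ℂ → Prop} :
    (∀ᶠ z in atInftyWithin S, P z) ↔ ∃ R : ℝ, ∀ z ∈ S, R ≤ ‖z‖ → P z := by
  rw [atInftyWithin, eventually_inf_principal]
  constructor
  · intro h
    rw [eventually_comap] at h
    rw [eventually_atTop] at h
    obtain ⟨R, hR⟩ := h
    exact ⟨R, fun z hz hRz => hR ‖z‖ hRz z rfl hz⟩
  · rintro ⟨R, hR⟩
    rw [eventually_comap, eventually_atTop]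
    exact ⟨R, fun b hb z hz hzS => hR z hzS (hz ▸ hb)⟩

lemma abs_tendsto_atInftyWithin (S : Set ℂ) :
    Tendsto (fun z => ‖z‖) (atInftyWithin S) atTop :=
  (tendsto_comap.mono_left inf_le_left)

lemma convex_rightHalfPlane : Convex ℝ rightHalfPlane := convex_halfSpace_re_gt 0

lemma tendsto_inv_add_one (S : Set ℂ) :
    Tendsto (fun z : ℂ => (z + 1)⁻¹) (atInftyWithin S) (𝓝 0) := by
  have h1 : Tendsto (fun z : ℂ => ‖z + 1‖) (atInftyWithin S) atTop := by
    apply tendsto_atTop_mono (fun z => ?_) (tendsto_atTop_add_const_right _ (-1) (abs_tendsto_atInftyWithin S))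
    have := norm_add_le (z+1) (-1)
    simp at this ⊢
    linarith
  rw [tendsto_zero_iff_norm_tendsto_zero]
  simp only [norm_inv]
  exact h1.inv_tendsto_atTop

lemma abs_eventually_ge (S : Set ℂ) (R : ℝ) : ∀ᶠ z in atInftyWithin S, R ≤ ‖z‖ :=
  (abs_tendsto_atInftyWithin S).eventually_ge_atTop R

lemma mem_eventually_atInftyWithin (S : Set ℂ) : ∀ᶠ z in atInftyWithin S, z ∈ S :=
  eventually_inf_principal.mpr (Eventually.of_forall (fun z hz => hz))

lemma phi_tendsto (φ : ℂ → ℂ) (β γ : ℂ)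
    (hrep : Tendsto (fun w : ℂ => w * (φ w - β - γ / (w + 1)))
      (atInftyWithin rightHalfPlane) (𝓝 0)) :
    Tendsto φ (atInftyWithin rightHalfPlane) (𝓝 β) := by
  have hinv : Tendsto (fun z : ℂ => z⁻¹) (atInftyWithin rightHalfPlane) (𝓝 0) := by
    rw [tendsto_zero_iff_norm_tendsto_zero]
    simp only [norm_inv]
    exact (abs_tendsto_atInftyWithin rightHalfPlane).inv_tendsto_atTop
  have h2 : Tendsto (fun z : ℂ => β + γ * (z+1)⁻¹ + z⁻¹ * (z * (φ z - β - γ / (z + 1))))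
      (atInftyWithin rightHalfPlane) (𝓝 β) := by
    have := (tendsto_const_nhds (x := β) (f := atInftyWithin rightHalfPlane)).add
      (((tendsto_const_nhds (x := γ)).mul (tendsto_inv_add_one rightHalfPlane)).add
      (hinv.mul hrep))
    simpa using this.congr (fun z => by ring)
  apply h2.congr'
  filter_upwards [abs_eventually_ge rightHalfPlane 1, mem_eventually_atInftyWithin rightHalfPlane]
    with z hz hzS
  have hz0 : z ≠ 0 := by
    intro h; rw [h] at hz; simp at hz; linarith
  have hz1 : z + 1 ≠ 0 := by
    intro h
    have : (z+1).re = 0 := by rw [h]; simp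
    simp [Complex.add_re] at this
    have : (0:ℝ) < z.re := hzS
    linarith [this]
  field_simp
  ring

lemma r_tendsto (φ : ℂ → ℂ) (β γ : ℂ) (hβ : β ≠ 0)
    (hnz : ∀ w ∈ rightHalfPlane, φ w ≠ 0)
    (hrep : Tendsto (fun w : ℂ => w * (φ w - β - γ / (w + 1)))
      (atInftyWithin rightHalfPlane) (𝓝 0)) :
    Tendsto (fun z : ℂ => z * (1 / φ z - 1 / β + γ / (β^2 * (z + 1))))
      (atInftyWithin rightHalfPlane) (𝓝 0) := by
  have hφ := phi_tendsto φ β γ hrep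
  have hq : Tendsto (fun z : ℂ => z * (z+1)⁻¹) (atInftyWithin rightHalfPlane) (𝓝 1) := by
    have h2 : Tendsto (fun z : ℂ => 1 - (z+1)⁻¹) (atInftyWithin rightHalfPlane) (𝓝 1) := by
      simpa using (tendsto_const_nhds (x := (1:ℂ))).sub (tendsto_inv_add_one rightHalfPlane)
    apply h2.congr'
    filter_upwards [abs_eventually_ge rightHalfPlane 1, mem_eventually_atInftyWithin rightHalfPlane]
      with z hz hzS
    have hz1 : z + 1 ≠ 0 := by
      intro h
      have h2 : (z+1).re = 0 := by rw [h]; simp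
      simp [Complex.add_re] at h2
      have : (0:ℝ) < z.re := hzS
      linarith
    field_simp
    ring
  have hg : Tendsto (fun z : ℂ => -(z * (φ z - β - γ / (z + 1)))/(β * φ z)
      + γ * (z * (z+1)⁻¹) * ((φ z - β)/(β^2 * φ z)))
      (atInftyWithin rightHalfPlane) (𝓝 0) := by
    have t1 : Tendsto (fun z : ℂ => -(z * (φ z - β - γ / (z + 1)))/(β * φ z))
        (atInftyWithin rightHalfPlane) (𝓝 (-0/(β*β))) :=
      (hrep.neg).div ((tendsto_const_nhds).mul hφ) (by simp [hβ])
    have t2 : Tendsto (fun z : ℂ => γ * (z * (z+1)⁻¹) * ((φ z - β)/(β^2 * φ z)))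
        (atInftyWithin rightHalfPlane) (𝓝 (γ * 1 * ((β - β)/(β^2*β)))) :=
      ((tendsto_const_nhds).mul hq).mul ((hφ.sub tendsto_const_nhds).div
        ((tendsto_const_nhds).mul hφ) (by simp [hβ]))
    simpa using t1.add t2
  apply hg.congr'
  filter_upwards [abs_eventually_ge rightHalfPlane 1, mem_eventually_atInftyWithin rightHalfPlane]
    with z hz hzS
  have hz1 : z + 1 ≠ 0 := by
    intro h
    have h2 : (z+1).re = 0 := by rw [h]; simp
    simp [Complex.add_re] at h2
    have : (0:ℝ) < z.re := hzS
    linarith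
  have hφz : φ z ≠ 0 := hnz z hzS
  field_simp [hβ, hφz, hz1]
  ring

lemma avg_tendsto (x d : ℝ → ℂ) (β : ℂ)
    (hx : ∀ t : ℝ, 0 ≤ t → HasDerivWithinAt x (d t) (Set.Ici 0) t)
    (hd : Tendsto d atTop (𝓝 β)) :
    Tendsto (fun t : ℝ => x t / t) atTop (𝓝 β) := by
  rw [Metric.tendsto_atTop]
  intro ε hε
  obtain ⟨T0, hT0⟩ := Metric.tendsto_atTop.1 hd (ε/3) (by positivity)
  set T : ℝ := max T0 0 with hT
  have hT0' : (0:ℝ) ≤ T := le_max_right _ _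
  have hderiv : ∀ t ∈ Set.Ici T, HasDerivWithinAt (fun s : ℝ => x s - (s:ℂ)*β)
      (d t - β) (Set.Ici T) t := by
    intro t ht
    have h1 : HasDerivWithinAt x (d t) (Set.Ici T) t :=
      (hx t (le_trans hT0' ht)).mono (Set.Ici_subset_Ici.2 hT0')
    have h2 : HasDerivAt (fun s : ℝ => (s:ℂ)*β) β t := by
      simpa using (Complex.ofRealCLM.hasDerivAt (x := t)).mul_const β
    exact h1.sub h2.hasDerivWithinAt
  have hbound : ∀ t ∈ Set.Ici T, ‖d t - β‖ ≤ ε/3 := by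
    intro t ht
    have := hT0 t (le_trans (le_max_left _ _) ht)
    rw [dist_eq_norm] at this
    linarith
  have key : ∀ t, T ≤ t → ‖x t - (t:ℂ)*β‖ ≤ ‖x T - (T:ℂ)*β‖ + ε/3 * (t - T) := by
    intro t ht
    have := Convex.norm_image_sub_le_of_norm_hasDerivWithin_le hderiv hbound
      (convex_Ici T) (Set.self_mem_Ici) ht
    have h3 : ‖t - T‖ = t - T := by
      rw [Real.norm_eq_abs, _root_.abs_of_nonneg (by linarith : (0:ℝ) ≤ t - T)]
    rw [h3] at this
    have h4 := norm_sub_norm_le (x t - (t:ℂ)*β) (x T - (T:ℂ)*β)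
    linarith
  set C := ‖x T - (T:ℂ)*β‖ with hC
  have hCpos : 0 ≤ C := norm_nonneg _
  refine ⟨max (T + 1) (3*C/ε + 1), fun t ht => ?_⟩
  have ht1 : T + 1 ≤ t := le_trans (le_max_left _ _) ht
  have ht2 : 3*C/ε + 1 ≤ t := le_trans (le_max_right _ _) ht
  have htpos : 0 < t := by linarith
  have hCt : C / t ≤ ε/3 := by
    rw [div_le_iff₀ htpos]
    have h5 : 3*C/ε ≤ t - 1 := by linarith
    rw [div_le_iff₀ hε] at h5
    nlinarith
  have hxt := key t (by linarith)
  rw [dist_eq_norm]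
  have htC : (t:ℂ) ≠ 0 := by exact_mod_cast htpos.ne'
  have heq : x t / t - β = (x t - (t:ℂ)*β) / t := by
    field_simp
  rw [heq]
  rw [norm_div]
  have hnt : ‖(t:ℂ)‖ = t := by
    rw [Complex.norm_real, Real.norm_eq_abs, abs_of_pos htpos]
  rw [hnt]
  rw [div_lt_iff₀ htpos]
  calc ‖x t - (t:ℂ)*β‖ ≤ C + ε/3 * (t - T) := hxt
    _ ≤ C + ε/3 * t := by nlinarith
    _ ≤ (ε/3) * t + (ε/3) * t := by
        have : C ≤ (ε/3) * t := by rw [div_le_iff₀ htpos] at hCt; linarith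
        linarith
    _ < ε * t := by nlinarith

set_option maxHeartbeats 2000000 in
theorem stmt15 (Φ : ℝ → ℂ → ℂ) (φ σ : ℂ → ℂ) (β γ : ℂ)
    (hsg : IsContinuousSemigroupOnHalfPlane Φ φ)
    (hdw : HasDWPointInfty Φ)
    (hnz : ∀ w ∈ rightHalfPlane, φ w ≠ 0)
    (hβ : β ≠ 0)
    (hrep : Tendsto (fun w : ℂ => w * (φ w - β - γ / (w + 1)))
      (atInftyWithin rightHalfPlane) (𝓝 0))
    (hσ : IsSigmaFunction φ σ) :
    ∀ w ∈ rightHalfPlane,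
      Tendsto (fun t : ℝ => (t : ℂ) * (Φ t w - Φ t 1 - β * σ w)) atTop
        (𝓝 (γ * σ w / β)) := by
  intro w hw
  have h1mem : (1:ℂ) ∈ rightHalfPlane := by simp [rightHalfPlane]
  set u : ℝ → ℂ := fun t => Φ t w with hu
  set v : ℝ → ℂ := fun t => Φ t 1 with hv
  set h : ℝ → ℂ := fun t => u t - v t with hh
  set ζ : ℝ → ℝ → ℂ := fun t s => v t + (s:ℂ) * h t with hζ
  set R : ℂ → ℂ := fun z => 1/φ z - 1/β + γ/(β^2*(z+1)) with hR
  have humem : ∀ t, 0 ≤ t → u t ∈ rightHalfPlane := fun t ht => hsg.mapsTo t ht hw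
  have hvmem : ∀ t, 0 ≤ t → v t ∈ rightHalfPlane := fun t ht => hsg.mapsTo t ht h1mem
  have huD : ∀ t, 0 ≤ t → HasDerivWithinAt u (φ (u t)) (Set.Ici 0) t :=
    fun t ht => hsg.ode w hw t ht
  have hvD : ∀ t, 0 ≤ t → HasDerivWithinAt v (φ (v t)) (Set.Ici 0) t :=
    fun t ht => hsg.ode 1 h1mem t ht
  -- trajectories tend to infinity within the half-plane
  have huF : Tendsto u atTop (atInftyWithin rightHalfPlane) := by
    rw [atInftyWithin, tendsto_inf]
    constructor
    · rw [tendsto_comap_iff]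
      exact hdw w hw
    · rw [tendsto_principal]
      exact eventually_atTop.2 ⟨0, humem⟩
  have hvF : Tendsto v atTop (atInftyWithin rightHalfPlane) := by
    rw [atInftyWithin, tendsto_inf]
    constructor
    · rw [tendsto_comap_iff]
      exact hdw 1 h1mem
    · rw [tendsto_principal]
      exact eventually_atTop.2 ⟨0, hvmem⟩
  have hφu : Tendsto (fun t => φ (u t)) atTop (𝓝 β) := (phi_tendsto φ β γ hrep).comp huF
  have hφv : Tendsto (fun t => φ (v t)) atTop (𝓝 β) := (phi_tendsto φ β γ hrep).comp hvF
  have huavg : Tendsto (fun t : ℝ => u t / t) atTop (𝓝 β) := avg_tendsto u _ β huD hφu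
  have hvavg : Tendsto (fun t : ℝ => v t / t) atTop (𝓝 β) := avg_tendsto v _ β hvD hφv
  have hhavg : Tendsto (fun t : ℝ => h t / t) atTop (𝓝 0) := by
    have := huavg.sub hvavg
    rw [sub_self] at this
    exact this.congr (fun t => (sub_div _ _ _).symm)
  -- the sigma identity along trajectories
  have hσid : ∀ t, 0 ≤ t → σ (u t) - σ (v t) = σ w := by
    have hF : ∀ t ∈ Set.Ici (0:ℝ), HasDerivWithinAt (fun s => σ (u s) - σ (v s))
        ((fun _ : ℝ => (0:ℂ)) t) (Set.Ici 0) t := by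
      intro t ht
      have d1 : HasDerivWithinAt (fun s => σ (u s)) ((1/φ (u t)) * φ (u t)) (Set.Ici 0) t :=
        (hσ.1 (u t) (humem t ht)).comp_hasDerivWithinAt t (huD t ht)
      have d2 : HasDerivWithinAt (fun s => σ (v s)) ((1/φ (v t)) * φ (v t)) (Set.Ici 0) t :=
        (hσ.1 (v t) (hvmem t ht)).comp_hasDerivWithinAt t (hvD t ht)
      have := d1.sub d2
      rw [one_div, inv_mul_cancel₀ (hnz _ (humem t ht)), one_div,
        inv_mul_cancel₀ (hnz _ (hvmem t ht)), sub_self] at this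
      exact this
    intro t ht
    have := Convex.norm_image_sub_le_of_norm_hasDerivWithin_le (C := 0) hF
      (fun x _ => by simp) (convex_Ici 0) Set.self_mem_Ici ht
    rw [mul_comm, mul_zero] at this
    have h0 : σ (u t) - σ (v t) - (σ (u 0) - σ (v 0)) = 0 := by
      have := norm_le_zero_iff.1 this
      exact this
    have hu0 : u 0 = w := hsg.init w hw
    have hv0 : v 0 = 1 := hsg.init 1 h1mem
    rw [hu0, hv0, hσ.2] at h0
    have := sub_eq_zero.1 h0
    rw [this]
    ring
  -- segment membership
  have hseg : ∀ t, 0 ≤ t → ∀ s ∈ Set.Icc (0:ℝ) 1, ζ t s ∈ rightHalfPlane := by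
    intro t ht s hs
    have hconv := convex_rightHalfPlane (hvmem t ht) (humem t ht)
      (a := 1 - s) (b := s) (by linarith [hs.2]) hs.1 (by ring)
    have : (1 - s) • v t + s • u t = ζ t s := by
      simp only [hζ, hh, Complex.real_smul]
      push_cast
      ring
    rwa [this] at hconv
  -- FTC + sigma identity
  have hζc : ∀ t, Continuous (fun s : ℝ => ζ t s) := by
    intro t
    simp only [hζ]
    fun_prop
  have hφζ : ∀ t, 0 ≤ t → ContinuousOn (fun s : ℝ => φ (ζ t s)) (Set.Icc 0 1) := by
    intro t ht
    exact hsg.gen_holomorphic.continuousOn.comp (hζc t).continuousOn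
      (fun s hs => hseg t ht s hs)
  have hkey : ∀ t, 0 ≤ t → σ w = ∫ s in (0:ℝ)..1, (1 / φ (ζ t s)) * h t := by
    intro t ht
    have hcont : ContinuousOn (fun s : ℝ => (1 / φ (ζ t s)) * h t) (Set.Icc 0 1) :=
      ((continuousOn_const.div (hφζ t ht) (fun s hs => hnz _ (hseg t ht s hs))).mul
        continuousOn_const)
    have hint : IntervalIntegrable (fun s : ℝ => (1 / φ (ζ t s)) * h t) volume 0 1 := by
      apply ContinuousOn.intervalIntegrable
      rwa [Set.uIcc_of_le zero_le_one]
    have hder : ∀ s ∈ Set.uIcc (0:ℝ) 1,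
        HasDerivAt (fun s' : ℝ => σ (ζ t s')) ((1 / φ (ζ t s)) * h t) s := by
      intro s hs
      rw [Set.uIcc_of_le zero_le_one] at hs
      have hz : HasDerivAt (fun s' : ℝ => ζ t s') (h t) s := by
        have h2 : HasDerivAt (fun s' : ℝ => ((s' : ℂ)) * h t) (h t) s := by
          simpa using (Complex.ofRealCLM.hasDerivAt (x := s)).mul_const (h t)
        simpa only [hζ] using h2.const_add (v t)
      exact (hσ.1 (ζ t s) (hseg t ht s hs)).comp s hz
    have hFTC := intervalIntegral.integral_eq_sub_of_hasDerivAt hder hint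
    have e1 : ζ t 1 = u t := by
      simp only [hζ, hh]
      push_cast
      ring
    have e2 : ζ t 0 = v t := by
      simp only [hζ, hh]
      push_cast
      ring
    rw [e1, e2] at hFTC
    rw [← hσid t ht, ← hFTC]
  -- decomposition
  have haux : ∀ z : ℂ, z ∈ rightHalfPlane → z + 1 ≠ 0 := by
    intro z hz h0
    have h2 : (z+1).re = 0 := by rw [h0]; simp
    simp only [Complex.add_re, Complex.one_re] at h2
    have hz' : (0:ℝ) < z.re := hz
    linarith
  have hint1 : ∀ t, 0 ≤ t → IntervalIntegrable (fun s : ℝ => (ζ t s + 1)⁻¹ * h t)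
      volume 0 1 := by
    intro t ht
    apply ContinuousOn.intervalIntegrable
    rw [Set.uIcc_of_le zero_le_one]
    exact (((hζc t).continuousOn.add continuousOn_const).inv₀
      (fun s hs => haux _ (hseg t ht s hs))).mul continuousOn_const
  have hintR : ∀ t, 0 ≤ t → IntervalIntegrable (fun s : ℝ => R (ζ t s) * h t)
      volume 0 1 := by
    intro t ht
    apply ContinuousOn.intervalIntegrable
    rw [Set.uIcc_of_le zero_le_one]
    apply ContinuousOn.mul _ continuousOn_const
    simp only [hR]
    apply ContinuousOn.add
    · exact (continuousOn_const.div (hφζ t ht) (fun s hs => hnz _ (hseg t ht s hs))).sub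
        continuousOn_const
    · exact continuousOn_const.div
        (continuousOn_const.mul ((hζc t).continuousOn.add continuousOn_const))
        (fun s hs => mul_ne_zero (pow_ne_zero 2 hβ) (haux _ (hseg t ht s hs)))
  have hident : ∀ t, 0 ≤ t → σ w = h t / β - (γ/β^2) * (∫ s in (0:ℝ)..1, (ζ t s + 1)⁻¹ * h t)
      + ∫ s in (0:ℝ)..1, R (ζ t s) * h t := by
    intro t ht
    calc σ w = ∫ s in (0:ℝ)..1, (1 / φ (ζ t s)) * h t := hkey t ht
      _ = ∫ s in (0:ℝ)..1, (((1/β)*h t - (γ/β^2)*((ζ t s + 1)⁻¹*h t)) + R (ζ t s) * h t) := by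
          apply intervalIntegral.integral_congr
          intro s hs
          simp only [hR]
          rw [div_eq_mul_inv γ (β^2*(ζ t s+1)), mul_inv]
          ring
      _ = (∫ s in (0:ℝ)..1, ((1/β)*h t - (γ/β^2)*((ζ t s + 1)⁻¹*h t)))
          + ∫ s in (0:ℝ)..1, R (ζ t s) * h t := by
          apply intervalIntegral.integral_add _ (hintR t ht)
          exact intervalIntegrable_const.sub ((hint1 t ht).const_mul _)
      _ = h t / β - (γ/β^2) * (∫ s in (0:ℝ)..1, (ζ t s + 1)⁻¹ * h t)
          + ∫ s in (0:ℝ)..1, R (ζ t s) * h t := by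
          congr 1
          rw [intervalIntegral.integral_sub intervalIntegrable_const
            ((hint1 t ht).const_mul _), intervalIntegral.integral_const_mul,
            intervalIntegral.integral_const]
          norm_num
          ring
  set I₁ : ℝ → ℂ := fun t => ∫ s in (0:ℝ)..1, (ζ t s + 1)⁻¹ * h t with hI₁def
  set I₂ : ℝ → ℂ := fun t => ∫ s in (0:ℝ)..1, R (ζ t s) * h t with hI₂def
  have hβn : (0:ℝ) < ‖β‖ := norm_pos_iff.2 hβ
  -- (v t + 1)/t → β
  have h1t : Tendsto (fun t : ℝ => 1/(t:ℂ)) atTop (𝓝 0) := by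
    have h2 : Tendsto (fun t : ℝ => ((t⁻¹ : ℝ) : ℂ)) atTop (𝓝 ((0:ℝ):ℂ)) :=
      (Complex.continuous_ofReal.tendsto 0).comp tendsto_inv_atTop_zero
    simpa [one_div, Complex.ofReal_inv] using h2
  have hv1 : Tendsto (fun t : ℝ => (v t + 1) / t) atTop (𝓝 β) := by
    have h2 : Tendsto (fun t : ℝ => v t / t + 1/(t:ℂ)) atTop (𝓝 (β + 0)) := hvavg.add h1t
    rw [add_zero] at h2
    exact h2.congr (fun t => by rw [add_div])
  -- eventual geometric bounds
  have hEvt : ∀ᶠ t : ℝ in atTop, ‖β‖/2 * t ≤ ‖v t + 1‖ := by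
    have h2 : ∀ᶠ t : ℝ in atTop, ‖β‖/2 ≤ ‖(v t + 1)/t‖ :=
      hv1.norm.eventually (eventually_ge_nhds (by linarith))
    filter_upwards [h2, eventually_gt_atTop 0] with t h3 h4
    rw [norm_div, Complex.norm_real, Real.norm_eq_abs, _root_.abs_of_pos h4,
      div_le_div_iff₀ (by positivity) h4] at h3
    calc ‖β‖/2 * t = ‖β‖/2 * t := rfl
      _ ≤ ‖v t + 1‖ := by nlinarith
  have hEh : ∀ᶠ t : ℝ in atTop, ‖h t‖ ≤ ‖β‖/4 * t := by
    have h2 : ∀ᶠ t : ℝ in atTop, ‖h t / t‖ ≤ ‖β‖/4 :=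
      hhavg.norm.eventually (eventually_le_nhds (by rw [norm_zero]; linarith))
    filter_upwards [h2, eventually_gt_atTop 0] with t h3 h4
    rw [norm_div, Complex.norm_real, Real.norm_eq_abs, _root_.abs_of_pos h4,
      div_le_iff₀ h4] at h3
    linarith
  have hsegbound : ∀ᶠ t : ℝ in atTop, ∀ s ∈ Set.Icc (0:ℝ) 1, ‖β‖/4 * t ≤ ‖ζ t s + 1‖ := by
    filter_upwards [hEvt, hEh, eventually_gt_atTop 0] with t h1 h2 h3
    intro s hs
    have e1 : ζ t s + 1 = (v t + 1) + (s:ℂ) * h t := by simp only [hζ]; ring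
    have h4 : ‖(s:ℂ) * h t‖ ≤ ‖h t‖ := by
      rw [norm_mul, Complex.norm_real, Real.norm_eq_abs, _root_.abs_of_nonneg hs.1]
      nlinarith [norm_nonneg (h t), hs.2]
    have h5 : ‖v t + 1‖ ≤ ‖v t + 1 + (s:ℂ) * h t‖ + ‖(s:ℂ) * h t‖ := by
      simpa using norm_add_le (v t + 1 + (s:ℂ) * h t) (-((s:ℂ) * h t))
    rw [e1]
    linarith
  have hsegabs : ∀ᶠ t : ℝ in atTop, ∀ s ∈ Set.Icc (0:ℝ) 1, ‖β‖/8 * t ≤ ‖ζ t s‖ := by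
    filter_upwards [hsegbound, eventually_ge_atTop (8/‖β‖), eventually_gt_atTop 0]
      with t h1 h2 h3
    intro s hs
    have h4 := norm_sub_norm_le (ζ t s + 1) (1 : ℂ)
    simp only [add_sub_cancel_right, norm_one] at h4
    have h5 : (1:ℝ) ≤ ‖β‖/8 * t := by
      rw [div_le_iff₀ hβn] at h2
      nlinarith
    have := h1 s hs
    linarith
  -- bound for R along the segment
  have hRb : ∀ ε > (0:ℝ), ∃ R₀ : ℝ, ∀ z ∈ rightHalfPlane, R₀ ≤ ‖z‖ →
      ‖z * R z‖ ≤ ε := by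
    intro ε hε
    have h2 := Metric.tendsto_nhds.1 (r_tendsto φ β γ hβ hnz hrep) ε hε
    rw [eventually_atInftyWithin] at h2
    obtain ⟨R₀, hR₀⟩ := h2
    refine ⟨R₀, fun z hz hle => ?_⟩
    have := hR₀ z hz hle
    rw [dist_zero_right] at this
    simp only [hR]
    exact le_of_lt this
  have hRseg : ∀ ε > (0:ℝ), ∀ᶠ t : ℝ in atTop, ∀ s ∈ Set.Icc (0:ℝ) 1,
      ‖R (ζ t s)‖ ≤ ε / (‖β‖/8 * t) := by
    intro ε hε
    obtain ⟨R₀, hR₀⟩ := hRb ε hε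
    filter_upwards [hsegabs, eventually_ge_atTop (8 * max R₀ 1 / ‖β‖),
      eventually_gt_atTop 0] with t h1 h2 h3
    intro s hs
    have hpos : (0:ℝ) < ‖β‖/8 * t := by positivity
    have habs : R₀ ≤ ‖ζ t s‖ := by
      have h4 : max R₀ 1 ≤ ‖β‖/8 * t := by
        rw [div_le_iff₀ hβn] at h2
        nlinarith
      have h5 := h1 s hs
      calc R₀ ≤ max R₀ 1 := le_max_left _ _
        _ ≤ ‖β‖/8 * t := h4
        _ ≤ ‖ζ t s‖ := h5
    have hz := hR₀ _ (hseg t (le_of_lt h3) s hs) habs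
    rw [norm_mul] at hz
    have h6 : ‖β‖/8 * t ≤ ‖ζ t s‖ := by
      exact h1 s hs
    rw [le_div_iff₀ hpos]
    calc ‖R (ζ t s)‖ * (‖β‖/8 * t) ≤ ‖R (ζ t s)‖ * ‖ζ t s‖ := by
          apply mul_le_mul_of_nonneg_left h6 (norm_nonneg _)
      _ = ‖ζ t s‖ * ‖R (ζ t s)‖ := by ring
      _ ≤ ε := hz
  -- integral bounds
  have hI1b : ∀ᶠ t : ℝ in atTop, ‖I₁ t‖ ≤ ‖h t‖ * 4 / (‖β‖ * t) := by
    filter_upwards [hsegbound, eventually_gt_atTop 0] with t h1 h2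
    have hbd : ∀ s ∈ Set.uIoc (0:ℝ) 1, ‖(ζ t s + 1)⁻¹ * h t‖ ≤ ‖h t‖ * 4 / (‖β‖ * t) := by
      intro s hs
      rw [Set.uIoc_of_le zero_le_one] at hs
      have hs' : s ∈ Set.Icc (0:ℝ) 1 := ⟨le_of_lt hs.1, hs.2⟩
      have h3 := h1 s hs'
      have hpos : (0:ℝ) < ‖β‖/4 * t := by positivity
      rw [norm_mul, norm_inv]
      have h4 : ‖(ζ t s + 1)‖⁻¹ ≤ (‖β‖/4 * t)⁻¹ := by
        apply inv_anti₀ hpos h3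
      calc ‖ζ t s + 1‖⁻¹ * ‖h t‖ ≤ (‖β‖/4 * t)⁻¹ * ‖h t‖ :=
            mul_le_mul_of_nonneg_right h4 (norm_nonneg _)
        _ = ‖h t‖ * 4 / (‖β‖ * t) := by field_simp
    have h7 := intervalIntegral.norm_integral_le_of_norm_le_const hbd
    rw [show |(1:ℝ) - (0:ℝ)| = 1 by norm_num, mul_one] at h7
    exact h7
  have hI2b : ∀ ε > (0:ℝ), ∀ᶠ t : ℝ in atTop, ‖I₂ t‖ ≤ ‖h t‖ * (8*ε) / (‖β‖ * t) := by
    intro ε hε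
    filter_upwards [hRseg ε hε, eventually_gt_atTop 0] with t h1 h2
    have hbd : ∀ s ∈ Set.uIoc (0:ℝ) 1, ‖R (ζ t s) * h t‖ ≤ ‖h t‖ * (8*ε) / (‖β‖ * t) := by
      intro s hs
      rw [Set.uIoc_of_le zero_le_one] at hs
      have hs' : s ∈ Set.Icc (0:ℝ) 1 := ⟨le_of_lt hs.1, hs.2⟩
      have h3 := h1 s hs'
      rw [norm_mul]
      calc ‖R (ζ t s)‖ * ‖h t‖ ≤ (ε / (‖β‖/8 * t)) * ‖h t‖ :=
            mul_le_mul_of_nonneg_right h3 (norm_nonneg _)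
        _ = ‖h t‖ * (8*ε) / (‖β‖ * t) := by field_simp
    have h7 := intervalIntegral.norm_integral_le_of_norm_le_const hbd
    rw [show |(1:ℝ) - (0:ℝ)| = 1 by norm_num, mul_one] at h7
    exact h7
  -- polynomial form of the identity
  have hident' : ∀ t, 0 ≤ t → β^2 * σ w = β * h t - γ * I₁ t + β^2 * I₂ t := by
    intro t ht
    have h2 := hident t ht
    have h3 : β^2 * σ w = β^2 * ((h t / β - γ/β^2 * I₁ t) + I₂ t) := by
      rw [← h2]
    rw [h3]
    have e1 : β^2 * (h t / β) = β * h t := by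
      field_simp
    have e2 : β^2 * (γ/β^2 * I₁ t) = γ * I₁ t := by
      field_simp
    rw [mul_add, mul_sub, e1, e2]
  -- boundedness of h
  set M : ℝ := 2*‖β‖*‖σ w‖ + 1 with hM
  have hM1 : (1:ℝ) ≤ M := by
    have h0 : (0:ℝ) ≤ 2*‖β‖*‖σ w‖ := by positivity
    rw [hM]; linarith
  have hMpos : (0:ℝ) < M := by linarith
  have hnormid : ∀ t, 0 ≤ t → ‖β‖ * ‖h t - β * σ w‖ ≤ ‖γ‖ * ‖I₁ t‖ + ‖β‖^2 * ‖I₂ t‖ := by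
    intro t ht
    have heq : β * (h t - β * σ w) = γ * I₁ t - β^2 * I₂ t := by
      linear_combination -(hident' t ht)
    calc ‖β‖ * ‖h t - β * σ w‖ = ‖β * (h t - β * σ w)‖ := (norm_mul _ _).symm
      _ = ‖γ * I₁ t - β^2 * I₂ t‖ := by rw [heq]
      _ ≤ ‖γ * I₁ t‖ + ‖β^2 * I₂ t‖ := norm_sub_le _ _
      _ = ‖γ‖ * ‖I₁ t‖ + ‖β‖^2 * ‖I₂ t‖ := by rw [norm_mul, norm_mul, norm_pow]
  have hhb : ∀ᶠ t : ℝ in atTop, ‖h t‖ ≤ M := by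
    filter_upwards [hI1b, hI2b 1 one_pos, eventually_gt_atTop 0, eventually_ge_atTop 0,
      eventually_ge_atTop ((8*‖γ‖ + 16*‖β‖^2)/‖β‖^2)] with t h1 h2 h3 h4 h5
    have h1' : ‖I₁ t‖ * (‖β‖ * t) ≤ ‖h t‖ * 4 := by
      rw [← le_div_iff₀ (by positivity)]; exact h1
    have h2' : ‖I₂ t‖ * (‖β‖ * t) ≤ ‖h t‖ * 8 := by
      have := h2
      rw [← le_div_iff₀ (by positivity)]
      calc ‖I₂ t‖ ≤ ‖h t‖ * (8*1) / (‖β‖ * t) := h2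
        _ = ‖h t‖ * 8 / (‖β‖ * t) := by norm_num
    have h5' : 8*‖γ‖ + 16*‖β‖^2 ≤ ‖β‖^2 * t := by
      rw [div_le_iff₀ (by positivity)] at h5
      linarith
    -- norm inequality for h itself
    have hn : ‖β‖ * ‖h t‖ ≤ ‖β‖^2 * ‖σ w‖ + ‖γ‖ * ‖I₁ t‖ + ‖β‖^2 * ‖I₂ t‖ := by
      have heq : β * h t = β^2 * σ w + γ * I₁ t - β^2 * I₂ t := by
        linear_combination -(hident' t h4)
      calc ‖β‖ * ‖h t‖ = ‖β * h t‖ := (norm_mul _ _).symm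
        _ = ‖β^2 * σ w + γ * I₁ t - β^2 * I₂ t‖ := by rw [heq]
        _ ≤ ‖β^2 * σ w + γ * I₁ t‖ + ‖β^2 * I₂ t‖ := norm_sub_le _ _
        _ ≤ ‖β^2 * σ w‖ + ‖γ * I₁ t‖ + ‖β^2 * I₂ t‖ := by
            linarith [norm_add_le (β^2 * σ w) (γ * I₁ t)]
        _ = ‖β‖^2 * ‖σ w‖ + ‖γ‖ * ‖I₁ t‖ + ‖β‖^2 * ‖I₂ t‖ := by
            rw [norm_mul, norm_mul, norm_mul, norm_pow]
    -- multiply through by ‖β‖ * t and conclude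
    have hbt : (0:ℝ) < ‖β‖ * t := by positivity
    have e3 : ‖β‖ * ‖h t‖ * (‖β‖ * t) ≤ (‖β‖^2 * ‖σ w‖) * (‖β‖ * t)
        + ‖γ‖ * (‖h t‖ * 4) + ‖β‖^2 * (‖h t‖ * 8) := by
      have g1 : ‖γ‖ * ‖I₁ t‖ * (‖β‖ * t) ≤ ‖γ‖ * (‖h t‖ * 4) := by
        have := mul_le_mul_of_nonneg_left h1' (norm_nonneg γ)
        nlinarith
      have g2 : ‖β‖^2 * ‖I₂ t‖ * (‖β‖ * t) ≤ ‖β‖^2 * (‖h t‖ * 8) := by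
        have := mul_le_mul_of_nonneg_left h2' (by positivity : (0:ℝ) ≤ ‖β‖^2)
        nlinarith
      nlinarith [mul_le_mul_of_nonneg_right hn (le_of_lt hbt)]
    -- 4‖γ‖ + 8‖β‖² ≤ ‖β‖²t/2
    have e4 : ‖γ‖ * (‖h t‖ * 4) + ‖β‖^2 * (‖h t‖ * 8) ≤ (‖β‖^2 * t / 2) * ‖h t‖ := by
      nlinarith [norm_nonneg (h t)]
    have e5 : ‖β‖^2 * t * ‖h t‖ ≤ ‖β‖^3 * t * ‖σ w‖ + (‖β‖^2 * t / 2) * ‖h t‖ := by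
      nlinarith
    have e6 : (‖β‖^2 * t / 2) * ‖h t‖ ≤ ‖β‖^3 * t * ‖σ w‖ := by linarith
    have e7 : ‖h t‖ ≤ 2 * ‖β‖ * ‖σ w‖ := by
      have hpos : (0:ℝ) < ‖β‖^2 * t / 2 := by positivity
      rw [← mul_le_mul_iff_right₀ hpos]
      calc (‖β‖^2 * t / 2) * ‖h t‖ ≤ ‖β‖^3 * t * ‖σ w‖ := e6
        _ = (‖β‖^2 * t / 2) * (2 * ‖β‖ * ‖σ w‖) := by ring
    rw [hM]; linarith
  -- quantitative convergence of h toward β σ w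
  set C₀ : ℝ := (4*M*‖γ‖ + 8*M*‖β‖^2)/‖β‖^2 with hC₀
  have hC₀pos : (0:ℝ) < C₀ := by positivity
  have hquant : ∀ᶠ t : ℝ in atTop, ‖h t - β * σ w‖ ≤ C₀ / t := by
    filter_upwards [hI1b, hI2b 1 one_pos, hhb, eventually_gt_atTop 0, eventually_ge_atTop 0]
      with t h1 h2 h3 h4 h5
    have hnid := hnormid t h5
    have hI1M : ‖I₁ t‖ ≤ M * 4 / (‖β‖ * t) := by
      calc ‖I₁ t‖ ≤ ‖h t‖ * 4 / (‖β‖ * t) := h1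
        _ ≤ M * 4 / (‖β‖ * t) := by
            apply div_le_div_of_nonneg_right _ (by positivity)
            linarith
    have hI2M : ‖I₂ t‖ ≤ M * 8 / (‖β‖ * t) := by
      calc ‖I₂ t‖ ≤ ‖h t‖ * (8*1) / (‖β‖ * t) := h2
        _ ≤ M * 8 / (‖β‖ * t) := by
            apply div_le_div_of_nonneg_right _ (by positivity)
            nlinarith
    have hmain : ‖β‖ * ‖h t - β * σ w‖ ≤ (4*M*‖γ‖ + 8*M*‖β‖^2) / (‖β‖ * t) := by
      calc ‖β‖ * ‖h t - β * σ w‖ ≤ ‖γ‖ * ‖I₁ t‖ + ‖β‖^2 * ‖I₂ t‖ := hnid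
        _ ≤ ‖γ‖ * (M * 4 / (‖β‖ * t)) + ‖β‖^2 * (M * 8 / (‖β‖ * t)) := by
            have g1 := mul_le_mul_of_nonneg_left hI1M (norm_nonneg γ)
            have g2 := mul_le_mul_of_nonneg_left hI2M (by positivity : (0:ℝ) ≤ ‖β‖^2)
            linarith
        _ = (4*M*‖γ‖ + 8*M*‖β‖^2) / (‖β‖ * t) := by ring
    rw [← mul_le_mul_iff_right₀ hβn]
    calc ‖β‖ * ‖h t - β * σ w‖ ≤ (4*M*‖γ‖ + 8*M*‖β‖^2) / (‖β‖ * t) := hmain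
      _ = ‖β‖ * (C₀ / t) := by
          rw [hC₀, div_div, mul_div_assoc']
          rw [div_eq_div_iff (by positivity) (by positivity)]
          ring

  -- decay of the recentring error
  set E : ℝ → ℝ := fun t => ‖(t:ℂ)*β - (v t + 1)‖ with hE
  have hEdecay : Tendsto (fun t => E t / t) atTop (𝓝 0) := by
    have h2 : Tendsto (fun t : ℝ => ‖β - (v t + 1)/t‖) atTop (𝓝 0) := by
      have h3 := (tendsto_const_nhds (x := β) (f := (atTop : Filter ℝ))).sub hv1
      rw [sub_self] at h3
      simpa using h3.norm
    apply h2.congr'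
    filter_upwards [eventually_gt_atTop 0] with t h3
    have htC : (t:ℂ) ≠ 0 := by exact_mod_cast h3.ne'
    have e : β - (v t + 1)/t = ((t:ℂ)*β - (v t + 1))/t := by
      field_simp
    rw [e, norm_div, Complex.norm_real, Real.norm_eq_abs, _root_.abs_of_pos h3]
  -- limit of t * I₁
  have hXlim : Tendsto (fun t : ℝ => (t:ℂ) * I₁ t) atTop (𝓝 (σ w)) := by
    rw [← tendsto_sub_nhds_zero_iff]
    set B : ℝ → ℝ := fun t => (C₀ + ‖σ w‖*M) * (4/‖β‖) / t + ‖σ w‖ * (4/‖β‖) * (E t / t)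
      with hB
    have hBlim : Tendsto B atTop (𝓝 0) := by
      have b1 : Tendsto (fun t : ℝ => (C₀ + ‖σ w‖*M) * (4/‖β‖) / t) atTop (𝓝 0) := by
        have := tendsto_inv_atTop_zero.const_mul ((C₀ + ‖σ w‖*M) * (4/‖β‖))
        rw [mul_zero] at this
        exact this.congr (fun t => (div_eq_mul_inv ((C₀ + ‖σ w‖*M) * (4/‖β‖)) t).symm)
      have b2 : Tendsto (fun t : ℝ => ‖σ w‖ * (4/‖β‖) * (E t / t)) atTop (𝓝 0) := by
        have := hEdecay.const_mul (‖σ w‖ * (4/‖β‖))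
        rwa [mul_zero] at this
      have := b1.add b2
      rwa [add_zero] at this
    apply squeeze_zero_norm' _ hBlim
    filter_upwards [hsegbound, hquant, hhb, eventually_gt_atTop 0, eventually_ge_atTop 0]
      with t h1 h2 h3 h4 h5
    have hi : (t:ℂ) * I₁ t - σ w
        = ∫ s in (0:ℝ)..1, ((t:ℂ) * ((ζ t s + 1)⁻¹ * h t) - σ w) := by
      rw [intervalIntegral.integral_sub ((hint1 t h5).const_mul _) intervalIntegrable_const,
        intervalIntegral.integral_const_mul, intervalIntegral.integral_const]
      simp only [hI₁def]
      norm_num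
    rw [hi]
    have hEnn : (0:ℝ) ≤ E t := norm_nonneg _
    have hbd : ∀ s ∈ Set.uIoc (0:ℝ) 1, ‖(t:ℂ) * ((ζ t s + 1)⁻¹ * h t) - σ w‖
        ≤ (C₀ + ‖σ w‖*(E t + M)) * (4/(‖β‖*t)) := by
      intro s hs
      rw [Set.uIoc_of_le zero_le_one] at hs
      have hs' : s ∈ Set.Icc (0:ℝ) 1 := ⟨le_of_lt hs.1, hs.2⟩
      have hmem := hseg t h5 s hs'
      have hne := haux _ hmem
      have e2 : (t:ℂ) * ((ζ t s + 1)⁻¹ * h t) - σ w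
          = ((t:ℂ) * h t - σ w * (ζ t s + 1)) * (ζ t s + 1)⁻¹ := by
        field_simp
      rw [e2, norm_mul, norm_inv]
      have hnum : ‖(t:ℂ) * h t - σ w * (ζ t s + 1)‖ ≤ C₀ + ‖σ w‖*(E t + M) := by
        have e3 : (t:ℂ) * h t - σ w * (ζ t s + 1)
            = (t:ℂ)*(h t - β*σ w) + σ w * (((t:ℂ)*β - (v t + 1)) - (s:ℂ)*h t) := by
          simp only [hζ]
          ring
        rw [e3]
        have n1 : ‖(t:ℂ)*(h t - β*σ w)‖ ≤ C₀ := by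
          rw [norm_mul, Complex.norm_real, Real.norm_eq_abs, _root_.abs_of_pos h4]
          calc t * ‖h t - β*σ w‖ ≤ t * (C₀/t) :=
                mul_le_mul_of_nonneg_left h2 (le_of_lt h4)
            _ = C₀ := by field_simp
        have n3 : ‖(s:ℂ)*h t‖ ≤ M := by
          rw [norm_mul, Complex.norm_real, Real.norm_eq_abs, _root_.abs_of_nonneg hs'.1]
          nlinarith [norm_nonneg (h t), hs'.2, hs'.1]
        have n2 : ‖((t:ℂ)*β - (v t + 1)) - (s:ℂ)*h t‖ ≤ E t + M := by
          calc ‖((t:ℂ)*β - (v t + 1)) - (s:ℂ)*h t‖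
              ≤ ‖(t:ℂ)*β - (v t + 1)‖ + ‖(s:ℂ)*h t‖ := norm_sub_le _ _
            _ ≤ E t + M := by
                have : ‖(t:ℂ)*β - (v t + 1)‖ = E t := rfl
                linarith
        calc ‖(t:ℂ)*(h t - β*σ w) + σ w * (((t:ℂ)*β - (v t + 1)) - (s:ℂ)*h t)‖
            ≤ ‖(t:ℂ)*(h t - β*σ w)‖ + ‖σ w * (((t:ℂ)*β - (v t + 1)) - (s:ℂ)*h t)‖ :=
              norm_add_le _ _
          _ ≤ C₀ + ‖σ w‖*(E t + M) := by
              rw [norm_mul (σ w)]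
              have := mul_le_mul_of_nonneg_left n2 (norm_nonneg (σ w))
              linarith
      have hden : ‖ζ t s + 1‖⁻¹ ≤ 4/(‖β‖*t) := by
        have h6 := h1 s hs'
        have hpos : (0:ℝ) < ‖β‖/4*t := by positivity
        calc ‖ζ t s + 1‖⁻¹ ≤ (‖β‖/4*t)⁻¹ := inv_anti₀ hpos h6
          _ = 4/(‖β‖*t) := by
              rw [inv_eq_one_div, div_eq_div_iff (by positivity) (by positivity)]
              ring
      have hnn : (0:ℝ) ≤ C₀ + ‖σ w‖*(E t + M) := by
        have := norm_nonneg (σ w)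
        nlinarith
      exact mul_le_mul hnum hden (by positivity) hnn
    have h7 := intervalIntegral.norm_integral_le_of_norm_le_const hbd
    rw [show |(1:ℝ) - (0:ℝ)| = 1 by norm_num, mul_one] at h7
    have e4 : (C₀ + ‖σ w‖*(E t + M)) * (4/(‖β‖*t)) = B t := by
      rw [hB]
      field_simp [hβn.ne', h4.ne']
      ring
    rw [← e4]
    exact h7
  -- limit of t * I₂
  have hYlim : Tendsto (fun t : ℝ => (t:ℂ) * I₂ t) atTop (𝓝 0) := by
    rw [Metric.tendsto_nhds]
    intro ε hε
    obtain ⟨ε', hε'def⟩ : ∃ x : ℝ, x = ε * ‖β‖ / (16 * M) := ⟨_, rfl⟩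
    have hε' : 0 < ε' := by rw [hε'def]; positivity
    filter_upwards [hI2b ε' hε', hhb, eventually_gt_atTop 0] with t h1 h2 h3
    rw [dist_zero_right, norm_mul, Complex.norm_real, Real.norm_eq_abs,
      _root_.abs_of_pos h3]
    have c1 : t * ‖I₂ t‖ ≤ t * (‖h t‖ * (8*ε') / (‖β‖ * t)) :=
      mul_le_mul_of_nonneg_left h1 (le_of_lt h3)
    have c2 : t * (‖h t‖ * (8*ε') / (‖β‖ * t)) = ‖h t‖ * (8*ε') / ‖β‖ := by
      rw [mul_div_assoc', div_eq_div_iff (by positivity) hβn.ne']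
      ring
    have c3 : ‖h t‖ * (8*ε') / ‖β‖ ≤ M * (8*ε') / ‖β‖ := by
      gcongr
    have c4 : M * (8*ε') / ‖β‖ < ε := by
      rw [div_lt_iff₀ hβn, hε'def]
      have e6 : M * (8 * (ε * ‖β‖ / (16 * M))) = (ε * ‖β‖) * ((8*M) / (16*M)) := by
        ring
      have e7 : (8*M) / (16*M) = 1/2 := by
        rw [div_eq_div_iff (by positivity) (by norm_num : (2:ℝ) ≠ 0)]
        ring
      rw [e6, e7]
      nlinarith [mul_pos hε hβn]
    calc t * ‖I₂ t‖ ≤ M * (8*ε') / ‖β‖ := by linarith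
      _ < ε := c4
  -- conclusion
  have hfin : ∀ᶠ t : ℝ in atTop, β * ((t:ℂ) * (h t - β * σ w))
      = γ * ((t:ℂ) * I₁ t) - β^2 * ((t:ℂ) * I₂ t) := by
    filter_upwards [eventually_ge_atTop 0] with t ht
    linear_combination -(t:ℂ) * hident' t ht
  have hcomb : Tendsto (fun t : ℝ => γ * ((t:ℂ) * I₁ t) - β^2 * ((t:ℂ) * I₂ t)) atTop
      (𝓝 (γ * σ w - β^2 * 0)) := (hXlim.const_mul γ).sub (hYlim.const_mul (β^2))
  have hcomb' : Tendsto (fun t : ℝ => β * ((t:ℂ) * (h t - β * σ w))) atTop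
      (𝓝 (γ * σ w - β^2 * 0)) := hcomb.congr' (hfin.mono (fun t e => e.symm))
  have h9 : Tendsto (fun t : ℝ => β⁻¹ * (β * ((t:ℂ) * (h t - β * σ w)))) atTop
      (𝓝 (β⁻¹ * (γ * σ w - β^2 * 0))) := hcomb'.const_mul β⁻¹
  have h10 : Tendsto (fun t : ℝ => (t:ℂ) * (h t - β * σ w)) atTop
      (𝓝 (β⁻¹ * (γ * σ w - β^2 * 0))) :=
    h9.congr (fun t => inv_mul_cancel_left₀ hβ _)
  have e5 : β⁻¹ * (γ * σ w - β^2 * 0) = γ * σ w / β := by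
    rw [mul_zero, sub_zero, div_eq_mul_inv]
    ring
  rw [e5] at h10
  exact h10
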